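/- ADI error bound for diagonalizable (possibly nonnormal) coefficient matrices: Let A ∈ ℂ^{m×m} and B ∈ ℂ^{n×n} be diagonalizable with eigendecompositions A = V_A Λ_A V_A^{−1} and B = V_B Λ_B V_B^{−1} and disjoint spectra, and let X be the unique solution of AX − XB = F. Let (α_1, β_1), …, (α_k, β_k) ∈ ℂ² be such that no β_j is an eigenvalue of A and no α_j is an eigenvalue of B, let X^{(k)} be the k-th ADI iterate starting from X^{(0)} = 0, and set r_k(z) = Π_{j=1}^{k} (z − α_j)/(z − β_j). Then ‖X − X^{(k)}‖₂ ≤ κ₂(V_A) κ₂(V_B) · ( sup_{z ∈ λ(A)} |r_k(z)| ) · ( sup_{w ∈ λ(B)} 1/|r_k(w)| ) · ‖X‖₂, where κ₂(M) = ‖M‖₂ ‖M^{−1}‖₂. -/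

import Mathlib

noncomputable def specNorm {m n : ℕ} (M : Matrix (Fin m) (Fin n) ℂ) : ℝ :=
  ‖LinearMap.toContinuousLinearMap (Matrix.toEuclideanLin M)‖

section aux

open scoped Matrix.Norms.L2Operator

lemma specNorm_eq {m n : ℕ} (M : Matrix (Fin m) (Fin n) ℂ) : specNorm M = ‖M‖ := rfl

lemma specNorm_nonneg {m n : ℕ} (M : Matrix (Fin m) (Fin n) ℂ) : 0 ≤ specNorm M :=
  norm_nonneg _

lemma specNorm_mul_le {m n p : ℕ} (M : Matrix (Fin m) (Fin n) ℂ) (N : Matrix (Fin n) (Fin p) ℂ) :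
    specNorm (M * N) ≤ specNorm M * specNorm N := by
  simpa only [specNorm_eq] using Matrix.l2_opNorm_mul M N

end aux

lemma specNorm_diagonal_le {m : ℕ} (d : Fin m → ℂ) (C : ℝ) (hC : 0 ≤ C)
    (h : ∀ i, ‖d i‖ ≤ C) : specNorm (Matrix.diagonal d) ≤ C := by
  apply ContinuousLinearMap.opNorm_le_bound _ hC
  intro x
  rw [show (LinearMap.toContinuousLinearMap (Matrix.toEuclideanLin (Matrix.diagonal d))) x = Matrix.toEuclideanLin (Matrix.diagonal d) x from rfl, Matrix.toEuclideanLin_apply]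
  rw [EuclideanSpace.norm_eq, EuclideanSpace.norm_eq]
  rw [← Real.sqrt_sq hC, ← Real.sqrt_mul (by positivity)]
  apply Real.sqrt_le_sqrt
  rw [Finset.mul_sum]
  apply Finset.sum_le_sum
  intro i _
  simp only [PiLp.toLp_apply, Matrix.mulVec_diagonal]
  rw [norm_mul]
  have h1 : ‖d i‖ ≤ C := h i
  calc (‖d i‖ * ‖(WithLp.equiv 2 (Fin m → ℂ)) x i‖) ^ 2
      = ‖d i‖^2 * ‖(WithLp.equiv 2 (Fin m → ℂ)) x i‖^2 := by ring
    _ ≤ C^2 * ‖x i‖^2 := by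
        apply mul_le_mul_of_nonneg_right _ (by positivity)
        exact pow_le_pow_left₀ (norm_nonneg _) h1 2

lemma le_biSup_range {m : ℕ} (g : Fin m → ℂ) (f : ℂ → ℝ) (hf : ∀ z, 0 ≤ f z) (i : Fin m) :
    f (g i) ≤ ⨆ z ∈ Set.range g, f z := by
  have hbdd : BddAbove (Set.range fun z => ⨆ _ : z ∈ Set.range g, f z) := by
    refine ⟨∑ j, f (g j), ?_⟩
    rintro y ⟨z, rfl⟩
    simp only []
    by_cases hz : z ∈ Set.range g
    · rw [ciSup_pos hz]
      obtain ⟨j, rfl⟩ := hz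
      exact Finset.single_le_sum (fun j _ => hf (g j)) (Finset.mem_univ j)
    · haveI : IsEmpty (z ∈ Set.range g) := ⟨hz⟩
      rw [Real.iSup_of_isEmpty]
      exact Finset.sum_nonneg fun j _ => hf (g j)
  calc f (g i) = ⨆ _ : g i ∈ Set.range g, f (g i) :=
        (ciSup_pos (f := fun _ : g i ∈ Set.range g => f (g i)) (Set.mem_range_self i)).symm
    _ ≤ ⨆ z ∈ Set.range g, f z := le_ciSup hbdd (g i)

lemma biSup_nonneg {S : Set ℂ} {f : ℂ → ℝ} (hf : ∀ z, 0 ≤ f z) :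
    0 ≤ ⨆ z ∈ S, f z :=
  Real.iSup_nonneg fun z => Real.iSup_nonneg fun _ => hf z

section conj
variable {m : ℕ} (V : Matrix (Fin m) (Fin m) ℂ)

lemma conj_diag_mul (hV : IsUnit V.det) (d e : Fin m → ℂ) :
    (V * Matrix.diagonal d * V⁻¹) * (V * Matrix.diagonal e * V⁻¹)
      = V * Matrix.diagonal (fun i => d i * e i) * V⁻¹ := by
  have h := Matrix.nonsing_inv_mul V hV
  calc (V * Matrix.diagonal d * V⁻¹) * (V * Matrix.diagonal e * V⁻¹)
      = V * Matrix.diagonal d * (V⁻¹ * V) * Matrix.diagonal e * V⁻¹ := by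
        simp only [Matrix.mul_assoc]
    _ = V * (Matrix.diagonal d * Matrix.diagonal e) * V⁻¹ := by
        rw [h, Matrix.mul_one]; simp only [Matrix.mul_assoc]
    _ = V * Matrix.diagonal (fun i => d i * e i) * V⁻¹ := by
        rw [Matrix.diagonal_mul_diagonal]

lemma conj_shift (hV : IsUnit V.det) (d : Fin m → ℂ) (c : ℂ) :
    V * Matrix.diagonal d * V⁻¹ - c • (1 : Matrix (Fin m) (Fin m) ℂ)
      = V * Matrix.diagonal (fun i => d i - c) * V⁻¹ := by
  have h : c • (1 : Matrix (Fin m) (Fin m) ℂ) = V * Matrix.diagonal (fun _ => c) * V⁻¹ := by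
    rw [Matrix.smul_one_eq_diagonal]
    rw [show (Matrix.diagonal fun _ => c) = (c • (1 : Matrix (Fin m) (Fin m) ℂ)) from
      (Matrix.smul_one_eq_diagonal c).symm]
    rw [Matrix.mul_smul, Matrix.mul_one, Matrix.smul_mul, Matrix.mul_nonsing_inv V hV,
      Matrix.smul_one_eq_diagonal]
  rw [h, ← Matrix.sub_mul, ← Matrix.mul_sub, Matrix.diagonal_sub]

lemma conj_diag_inv (hV : IsUnit V.det) (d : Fin m → ℂ) (hd : ∀ i, d i ≠ 0) :
    (V * Matrix.diagonal d * V⁻¹)⁻¹ = V * Matrix.diagonal (fun i => (d i)⁻¹) * V⁻¹ := by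
  apply Matrix.inv_eq_right_inv
  rw [conj_diag_mul V hV]
  have h : (fun i => d i * (d i)⁻¹) = fun _ => (1:ℂ) := by
    funext i; exact mul_inv_cancel₀ (hd i)
  rw [h, Matrix.diagonal_one, Matrix.mul_one, Matrix.mul_nonsing_inv V hV]

lemma conj_diag_det_isUnit (hV : IsUnit V.det) (d : Fin m → ℂ) (hd : ∀ i, d i ≠ 0) :
    IsUnit (V * Matrix.diagonal d * V⁻¹).det := by
  rw [Matrix.det_mul, Matrix.det_mul, Matrix.det_diagonal]
  exact (hV.mul (IsUnit.mk0 _ (Finset.prod_ne_zero_iff.2 fun i _ => hd i))).mul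
    (Matrix.isUnit_nonsing_inv_det V hV)

end conj


lemma final_arith {a a' b b' x dA dB SA SB : ℝ} (hx : 0 ≤ x)
    (ha : 0 ≤ a) (ha' : 0 ≤ a') (hb : 0 ≤ b) (hb' : 0 ≤ b')
    (hdA0 : 0 ≤ dA) (hdB0 : 0 ≤ dB) (hSA0 : 0 ≤ SA) (hSB0 : 0 ≤ SB)
    (hdA : dA ≤ SA) (hdB : dB ≤ SB) :
    ((a * dA * a') * x) * (b * dB * b') ≤ (a * a') * (b * b') * SA * SB * x := by
  calc ((a * dA * a') * x) * (b * dB * b') ≤ ((a * SA * a') * x) * (b * SB * b') := by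
        gcongr
    _ = (a * a') * (b * b') * SA * SB * x := by ring

set_option maxHeartbeats 1000000 in
/-- **ADI error bound for diagonalizable (possibly nonnormal) coefficient matrices.**
If `A = V_A Λ_A V_A⁻¹`, `B = V_B Λ_B V_B⁻¹` are diagonalizable with disjoint spectra,
`X` is the solution of `AX - XB = F`, and `X⁽ᵏ⁾` is the `k`-th ADI iterate (from
`X⁽⁰⁾ = 0`, with shifts avoiding the spectra), then
`‖X - X⁽ᵏ⁾‖₂ ≤ κ₂(V_A) κ₂(V_B) (sup_{z ∈ λ(A)} |r_k(z)|) (sup_{w ∈ λ(B)} 1/|r_k(w)|) ‖X‖₂`,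
where `r_k(z) = ∏ⱼ (z - αⱼ)/(z - βⱼ)` and `κ₂(M) = ‖M‖₂‖M⁻¹‖₂`. -/
theorem adi_error_bound_diagonalizable {m n : ℕ}
    (A : Matrix (Fin m) (Fin m) ℂ) (B : Matrix (Fin n) (Fin n) ℂ)
    (VA : Matrix (Fin m) (Fin m) ℂ) (VB : Matrix (Fin n) (Fin n) ℂ)
    (hVA : IsUnit VA.det) (hVB : IsUnit VB.det)
    (ΛA : Fin m → ℂ) (ΛB : Fin n → ℂ)
    (hAeig : A = VA * Matrix.diagonal ΛA * VA⁻¹)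
    (hBeig : B = VB * Matrix.diagonal ΛB * VB⁻¹)
    (hdisj : spectrum ℂ A ∩ spectrum ℂ B = ∅)
    (F X : Matrix (Fin m) (Fin n) ℂ) (hX : A * X - X * B = F)
    (k : ℕ) (α β : ℕ → ℂ)
    (hβ : ∀ j < k, β j ∉ spectrum ℂ A)
    (hα : ∀ j < k, α j ∉ spectrum ℂ B)
    (Xfull Xhalf : ℕ → Matrix (Fin m) (Fin n) ℂ)
    (h0 : Xfull 0 = 0)
    (hstep1 : ∀ j < k, (A - β j • 1) * Xhalf j = Xfull j * (B - β j • 1) + F)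
    (hstep2 : ∀ j < k, Xfull (j + 1) * (B - α j • 1) = (A - α j • 1) * Xhalf j - F) :
    specNorm (X - Xfull k) ≤
      (specNorm VA * specNorm VA⁻¹) * (specNorm VB * specNorm VB⁻¹) *
        (⨆ z ∈ spectrum ℂ A,
          ‖∏ j ∈ Finset.range k, (z - α j) / (z - β j)‖) *
        (⨆ w ∈ spectrum ℂ B,
          (‖∏ j ∈ Finset.range k, (w - α j) / (w - β j)‖)⁻¹) *
        specNorm X := by
  have hUA : IsUnit VA := (Matrix.isUnit_iff_isUnit_det VA).2 hVA
  have hUB : IsUnit VB := (Matrix.isUnit_iff_isUnit_det VB).2 hVB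
  have hsA : spectrum ℂ A = Set.range ΛA := by
    rw [hAeig]
    calc spectrum ℂ (VA * Matrix.diagonal ΛA * VA⁻¹)
        = spectrum ℂ ((hUA.unit : Matrix (Fin m) (Fin m) ℂ) * Matrix.diagonal ΛA *
            ((hUA.unit⁻¹ : (Matrix (Fin m) (Fin m) ℂ)ˣ) : Matrix (Fin m) (Fin m) ℂ)) := by
          rw [hUA.unit_spec, Matrix.coe_units_inv, hUA.unit_spec]
      _ = spectrum ℂ (Matrix.diagonal ΛA) := spectrum.units_conjugate
      _ = Set.range ΛA := spectrum_diagonal ΛA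
  have hsB : spectrum ℂ B = Set.range ΛB := by
    rw [hBeig]
    calc spectrum ℂ (VB * Matrix.diagonal ΛB * VB⁻¹)
        = spectrum ℂ ((hUB.unit : Matrix (Fin n) (Fin n) ℂ) * Matrix.diagonal ΛB *
            ((hUB.unit⁻¹ : (Matrix (Fin n) (Fin n) ℂ)ˣ) : Matrix (Fin n) (Fin n) ℂ)) := by
          rw [hUB.unit_spec, Matrix.coe_units_inv, hUB.unit_spec]
      _ = spectrum ℂ (Matrix.diagonal ΛB) := spectrum.units_conjugate
      _ = Set.range ΛB := spectrum_diagonal ΛB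
  have hAβ : ∀ j < k, ∀ i, ΛA i - β j ≠ 0 := by
    intro j hj i h
    exact hβ j hj (hsA ▸ ⟨i, sub_eq_zero.1 h⟩)
  have hBα : ∀ j < k, ∀ i, ΛB i - α j ≠ 0 := by
    intro j hj i h
    exact hα j hj (hsB ▸ ⟨i, sub_eq_zero.1 h⟩)
  -- conjugated shifts
  have hAshift : ∀ c : ℂ, A - c • 1 = VA * Matrix.diagonal (fun i => ΛA i - c) * VA⁻¹ := by
    intro c; rw [hAeig, conj_shift VA hVA]
  have hBshift : ∀ c : ℂ, B - c • 1 = VB * Matrix.diagonal (fun i => ΛB i - c) * VB⁻¹ := by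
    intro c; rw [hBeig, conj_shift VB hVB]
  -- main induction
  have key : ∀ j, j ≤ k → X - Xfull j =
      (VA * Matrix.diagonal (fun i => ∏ l ∈ Finset.range j, (ΛA i - α l) * (ΛA i - β l)⁻¹) * VA⁻¹)
        * X *
      (VB * Matrix.diagonal (fun i => ∏ l ∈ Finset.range j, (ΛB i - β l) * (ΛB i - α l)⁻¹)
        * VB⁻¹) := by
    intro j
    induction j with
    | zero =>
      intro _
      simp only [Finset.range_zero, Finset.prod_empty, h0, sub_zero]
      rw [Matrix.diagonal_one, Matrix.diagonal_one, Matrix.mul_one, Matrix.mul_one,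
        Matrix.mul_nonsing_inv VA hVA, Matrix.mul_nonsing_inv VB hVB,
        Matrix.one_mul, Matrix.mul_one]
    | succ j ih =>
      intro hjk
      have hj : j < k := hjk
      have ihe := ih hj.le
      have hdetAβ : IsUnit (A - β j • 1).det := by
        rw [hAshift]; exact conj_diag_det_isUnit VA hVA _ (hAβ j hj)
      have hdetBα : IsUnit (B - α j • 1).det := by
        rw [hBshift]; exact conj_diag_det_isUnit VB hVB _ (hBα j hj)
      have hAX : (A - β j • 1) * X - X * (B - β j • 1) = F := by
        rw [Matrix.sub_mul, Matrix.mul_sub, Matrix.smul_mul, Matrix.mul_smul,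
          Matrix.one_mul, Matrix.mul_one, ← hX]
        abel
      have e1 : (A - β j • 1) * (X - Xhalf j) = (X - Xfull j) * (B - β j • 1) := by
        have h1 := hstep1 j hj
        calc (A - β j • 1) * (X - Xhalf j)
            = (A - β j • 1) * X - (A - β j • 1) * Xhalf j := Matrix.mul_sub _ _ _
          _ = (A - β j • 1) * X - (Xfull j * (B - β j • 1) + F) := by rw [h1]
          _ = (X - Xfull j) * (B - β j • 1) := by rw [← hAX]; simp only [Matrix.sub_mul, Matrix.mul_sub]; abel
      have hXB : (A - α j • 1) * X - X * (B - α j • 1) = F := by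
        rw [Matrix.sub_mul, Matrix.mul_sub, Matrix.smul_mul, Matrix.mul_smul,
          Matrix.one_mul, Matrix.mul_one, ← hX]
        abel
      have e2 : (X - Xfull (j + 1)) * (B - α j • 1) = (A - α j • 1) * (X - Xhalf j) := by
        have h2 := hstep2 j hj
        calc (X - Xfull (j + 1)) * (B - α j • 1)
            = X * (B - α j • 1) - Xfull (j + 1) * (B - α j • 1) := Matrix.sub_mul _ _ _
          _ = X * (B - α j • 1) - ((A - α j • 1) * Xhalf j - F) := by rw [h2]
          _ = (A - α j • 1) * (X - Xhalf j) := by rw [← hXB]; simp only [Matrix.sub_mul, Matrix.mul_sub]; abel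
      have hXhalf : X - Xhalf j = (A - β j • 1)⁻¹ * ((X - Xfull j) * (B - β j • 1)) := by
        rw [← e1, ← Matrix.mul_assoc, Matrix.nonsing_inv_mul _ hdetAβ, Matrix.one_mul]
      have hE : X - Xfull (j + 1) = (A - α j • 1) * (X - Xhalf j) * (B - α j • 1)⁻¹ := by
        rw [← e2, Matrix.mul_assoc, Matrix.mul_nonsing_inv _ hdetBα, Matrix.mul_one]
      have hfactA : (A - α j • 1) * (A - β j • 1)⁻¹
          = VA * Matrix.diagonal (fun i => (ΛA i - α j) * (ΛA i - β j)⁻¹) * VA⁻¹ := by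
        rw [hAshift, hAshift, conj_diag_inv VA hVA _ (hAβ j hj), conj_diag_mul VA hVA]
      have hfactB : (B - β j • 1) * (B - α j • 1)⁻¹
          = VB * Matrix.diagonal (fun i => (ΛB i - β j) * (ΛB i - α j)⁻¹) * VB⁻¹ := by
        rw [hBshift, hBshift, conj_diag_inv VB hVB _ (hBα j hj), conj_diag_mul VB hVB]
      have hPA : VA * Matrix.diagonal
            (fun i => ∏ l ∈ Finset.range (j+1), (ΛA i - α l) * (ΛA i - β l)⁻¹) * VA⁻¹
          = ((A - α j • 1) * (A - β j • 1)⁻¹) *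
            (VA * Matrix.diagonal
              (fun i => ∏ l ∈ Finset.range j, (ΛA i - α l) * (ΛA i - β l)⁻¹) * VA⁻¹) := by
        have hfunA : (fun i => ∏ l ∈ Finset.range (j+1), (ΛA i - α l) * (ΛA i - β l)⁻¹)
            = fun i => ((ΛA i - α j) * (ΛA i - β j)⁻¹) *
                ∏ l ∈ Finset.range j, (ΛA i - α l) * (ΛA i - β l)⁻¹ := by
          funext i; rw [Finset.prod_range_succ]; ring
        rw [hfactA, conj_diag_mul VA hVA, hfunA]
      have hQB : VB * Matrix.diagonal
            (fun i => ∏ l ∈ Finset.range (j+1), (ΛB i - β l) * (ΛB i - α l)⁻¹) * VB⁻¹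
          = (VB * Matrix.diagonal
              (fun i => ∏ l ∈ Finset.range j, (ΛB i - β l) * (ΛB i - α l)⁻¹) * VB⁻¹) *
            ((B - β j • 1) * (B - α j • 1)⁻¹) := by
        have hfunB : (fun i => ∏ l ∈ Finset.range (j+1), (ΛB i - β l) * (ΛB i - α l)⁻¹)
            = fun i => (∏ l ∈ Finset.range j, (ΛB i - β l) * (ΛB i - α l)⁻¹) *
                ((ΛB i - β j) * (ΛB i - α j)⁻¹) := by
          funext i; rw [Finset.prod_range_succ]
        rw [hfactB, conj_diag_mul VB hVB, hfunB]
      rw [hE, hXhalf, ihe, hPA, hQB]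
      simp only [Matrix.mul_assoc]
  have hEk := key k le_rfl
  rw [hEk, hsA, hsB]
  -- abbreviations
  set pk : Fin m → ℂ := fun i => ∏ l ∈ Finset.range k, (ΛA i - α l) * (ΛA i - β l)⁻¹ with hpk
  set qk : Fin n → ℂ := fun i => ∏ l ∈ Finset.range k, (ΛB i - β l) * (ΛB i - α l)⁻¹ with hqk
  set SA : ℝ := ⨆ z ∈ Set.range ΛA,
    ‖∏ l ∈ Finset.range k, (z - α l) / (z - β l)‖ with hSAdef
  set SB : ℝ := ⨆ w ∈ Set.range ΛB,
    (‖∏ l ∈ Finset.range k, (w - α l) / (w - β l)‖)⁻¹ with hSBdef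
  have hfA : ∀ z : ℂ, 0 ≤ ‖∏ l ∈ Finset.range k, (z - α l) / (z - β l)‖ :=
    fun z => norm_nonneg _
  have hfB : ∀ w : ℂ, 0 ≤ (‖∏ l ∈ Finset.range k, (w - α l) / (w - β l)‖)⁻¹ :=
    fun w => inv_nonneg.2 (norm_nonneg _)
  have hSA0 : 0 ≤ SA := biSup_nonneg hfA
  have hSB0 : 0 ≤ SB := biSup_nonneg hfB
  have hdA : specNorm (Matrix.diagonal pk) ≤ SA := by
    apply specNorm_diagonal_le _ _ hSA0
    intro i
    have h1 : pk i = ∏ l ∈ Finset.range k, (ΛA i - α l) / (ΛA i - β l) := by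
      rw [hpk]; exact Finset.prod_congr rfl fun l _ => (div_eq_mul_inv _ _).symm
    rw [h1]
    exact le_biSup_range ΛA _ hfA i
  have hdB : specNorm (Matrix.diagonal qk) ≤ SB := by
    apply specNorm_diagonal_le _ _ hSB0
    intro i
    have h1 : qk i = (∏ l ∈ Finset.range k, (ΛB i - α l) / (ΛB i - β l))⁻¹ := by
      rw [hqk, ← Finset.prod_inv_distrib]
      refine Finset.prod_congr rfl fun l _ => ?_
      rw [div_eq_mul_inv, mul_inv, inv_inv, mul_comm]
    rw [h1, norm_inv]
    exact le_biSup_range ΛB _ hfB i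
  -- numeric assembly
  have ha := specNorm_nonneg VA
  have ha' := specNorm_nonneg VA⁻¹
  have hb := specNorm_nonneg VB
  have hb' := specNorm_nonneg VB⁻¹
  have hx := specNorm_nonneg X
  have hdA0 := specNorm_nonneg (Matrix.diagonal pk)
  have hdB0 := specNorm_nonneg (Matrix.diagonal qk)
  have hPAle : specNorm (VA * Matrix.diagonal pk * VA⁻¹)
      ≤ specNorm VA * specNorm (Matrix.diagonal pk) * specNorm VA⁻¹ := by
    calc specNorm (VA * Matrix.diagonal pk * VA⁻¹)
        ≤ specNorm (VA * Matrix.diagonal pk) * specNorm VA⁻¹ := specNorm_mul_le _ _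
      _ ≤ specNorm VA * specNorm (Matrix.diagonal pk) * specNorm VA⁻¹ :=
          mul_le_mul_of_nonneg_right (specNorm_mul_le _ _) ha'
  have hQBle : specNorm (VB * Matrix.diagonal qk * VB⁻¹)
      ≤ specNorm VB * specNorm (Matrix.diagonal qk) * specNorm VB⁻¹ := by
    calc specNorm (VB * Matrix.diagonal qk * VB⁻¹)
        ≤ specNorm (VB * Matrix.diagonal qk) * specNorm VB⁻¹ := specNorm_mul_le _ _
      _ ≤ specNorm VB * specNorm (Matrix.diagonal qk) * specNorm VB⁻¹ :=
          mul_le_mul_of_nonneg_right (specNorm_mul_le _ _) hb'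
  have hPA0 := specNorm_nonneg (VA * Matrix.diagonal pk * VA⁻¹)
  have hQB0 := specNorm_nonneg (VB * Matrix.diagonal qk * VB⁻¹)
  have hmain : specNorm ((VA * Matrix.diagonal pk * VA⁻¹) * X * (VB * Matrix.diagonal qk * VB⁻¹))
      ≤ ((specNorm VA * specNorm (Matrix.diagonal pk) * specNorm VA⁻¹) * specNorm X)
          * (specNorm VB * specNorm (Matrix.diagonal qk) * specNorm VB⁻¹) := by
    calc specNorm ((VA * Matrix.diagonal pk * VA⁻¹) * X * (VB * Matrix.diagonal qk * VB⁻¹))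
        ≤ specNorm ((VA * Matrix.diagonal pk * VA⁻¹) * X)
            * specNorm (VB * Matrix.diagonal qk * VB⁻¹) := specNorm_mul_le _ _
      _ ≤ (specNorm (VA * Matrix.diagonal pk * VA⁻¹) * specNorm X)
            * specNorm (VB * Matrix.diagonal qk * VB⁻¹) :=
          mul_le_mul_of_nonneg_right (specNorm_mul_le _ _) hQB0
      _ ≤ ((specNorm VA * specNorm (Matrix.diagonal pk) * specNorm VA⁻¹) * specNorm X)
            * (specNorm VB * specNorm (Matrix.diagonal qk) * specNorm VB⁻¹) := by
          apply mul_le_mul (mul_le_mul_of_nonneg_right hPAle hx) hQBle hQB0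
          positivity
  exact le_trans hmain (final_arith hx ha ha' hb hb' hdA0 hdB0 hSA0 hSB0 hdA hdB)
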